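/- Let $K$ be a complete nonarchimedean valued field with $\mathbb{Q}$-valued valuation, $a \in \mathbb{Q}$, and let $V_1 \subseteq V_2 \subseteq \cdots \subseteq V_\infty$ be an increasing chain of $K$-vector spaces with $V_\infty = \bigcup_i V_i$. Let $T$ be an endomorphism of $V_\infty$ with $T(V_i) \subseteq V_{i-1}$ for all $i > 1$. If each $V_i$ admits a slope $\le a$ decomposition for $T|_{V_i}$, then $V_{i,\le a}$ is independent of $i$, and $V_\infty$ admits a slope $\le a$ decomposition for $T$ with $V_{\infty,\le a} = V_{i,\le a}$ for any $i$ and $V_{\infty,>a} = \bigcup_i V_{i,>a}$. -/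

import Mathlib

open Polynomial

variable (K : Type) [Field K]

/-- An additive valuation on the algebraic closure of `K`, nontrivial,
nonarchimedean, normalized with values in `ℚ` (together with `∞ = v 0`). -/
structure AlgClosureValuation where
  v : AlgebraicClosure K → WithTop ℚ
  v_eq_top_iff : ∀ x, v x = ⊤ ↔ x = 0
  v_mul : ∀ x y, v (x * y) = v x + v y
  v_add : ∀ x y, min (v x) (v y) ≤ v (x + y)
  nontrivial : ∃ x : AlgebraicClosure K, x ≠ 0 ∧ v x ≠ 0

/-- `K` is complete with respect to the restriction of the valuation:
every Cauchy sequence in `K` converges in `K`. -/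
def AlgClosureValuation.IsComplete (V : AlgClosureValuation K) : Prop :=
  ∀ x : ℕ → K,
    (∀ q : ℚ, ∃ N : ℕ, ∀ i ≥ N, ∀ j ≥ N,
        (q : WithTop ℚ) < V.v (algebraMap K (AlgebraicClosure K) (x i - x j))) →
    ∃ l : K, ∀ q : ℚ, ∃ N : ℕ, ∀ i ≥ N,
        (q : WithTop ℚ) < V.v (algebraMap K (AlgebraicClosure K) (x i - l))

/-- A polynomial `P ∈ K[X]` has slopes `≤ a` : `P ≠ 0` and every root of `P` in the
algebraic closure has valuation `≤ a`. -/
def SlopesLE (V : AlgClosureValuation K) (a : ℚ) (P : K[X]) : Prop :=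
  P ≠ 0 ∧ ∀ x : AlgebraicClosure K, Polynomial.aeval x P = 0 → V.v x ≤ (a : WithTop ℚ)

/-- A slope `≤ a` decomposition `W = W1 ⊕ W2` of a subspace `W` (with respect to an
endomorphism `T` preserving everything): `W1` and `W2` are `T`-invariant, `W1` is
finite dimensional and killed by some polynomial with slopes `≤ a`, and every
polynomial with slopes `≤ a` acts invertibly on `W2`. -/
def SlopeDecompOn (V : AlgClosureValuation K) (a : ℚ)
    (M : Type) [AddCommGroup M] [Module K M] (T : M →ₗ[K] M)
    (W W1 W2 : Submodule K M) : Prop :=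
  W1 ≤ W ∧ W2 ≤ W ∧ W1 ⊔ W2 = W ∧ W1 ⊓ W2 = ⊥ ∧
  W1.map T ≤ W1 ∧ W2.map T ≤ W2 ∧
  FiniteDimensional K W1 ∧
  (∃ P : K[X], SlopesLE K V a P ∧ ∀ x ∈ W1, Polynomial.aeval T P x = 0) ∧
  (∀ P : K[X], SlopesLE K V a P →
    Submodule.map (Polynomial.aeval T P) W2 = W2 ∧
    ∀ x ∈ W2, Polynomial.aeval T P x = 0 → x = 0)


lemma aux_map_aeval_mem {K M : Type} [Field K] [AddCommGroup M] [Module K M]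
    (T : M →ₗ[K] M) (N : Submodule K M) (hN : N.map T ≤ N) (Q : K[X]) :
    ∀ x ∈ N, Polynomial.aeval T Q x ∈ N := by
  induction Q using Polynomial.induction_on with
  | C c => intro x hx; simpa [Module.algebraMap_end_apply] using N.smul_mem c hx
  | add p q hp hq => intro x hx; rw [map_add, LinearMap.add_apply]
                     exact N.add_mem (hp x hx) (hq x hx)
  | monomial n c ih =>
    intro x hx
    have : (C c * X ^ (n + 1)) = (C c * X ^ n) * X := by ring
    rw [this, map_mul, Module.End.mul_apply, Polynomial.aeval_X]
    exact ih (T x) (hN ⟨x, hx, rfl⟩)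

lemma aux_coeff_zero_ne {K : Type} [Field K] (V : AlgClosureValuation K) (a : ℚ)
    (P : K[X]) (hP : SlopesLE K V a P) : P.coeff 0 ≠ 0 := by
  intro h
  have h0 : Polynomial.aeval (0 : AlgebraicClosure K) P = 0 := by
    rw [Polynomial.aeval_def, Polynomial.eval₂_at_zero, h, map_zero]
  have := hP.2 0 h0
  rw [(V.v_eq_top_iff 0).2 rfl] at this
  exact WithTop.coe_ne_top (top_le_iff.mp this)

lemma aux_exists_preimage {K M : Type} [Field K] [AddCommGroup M] [Module K M]
    (T : M →ₗ[K] M) (A : Submodule K M) (hA : A.map T ≤ A)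
    (P : K[X]) (hc : P.coeff 0 ≠ 0) (x : M) (hx : x ∈ A)
    (hkill : Polynomial.aeval T P x = 0) : ∃ y ∈ A, T y = x := by
  refine ⟨(-(P.coeff 0)⁻¹) • Polynomial.aeval T P.divX x,
    A.smul_mem _ (aux_map_aeval_mem T A hA _ x hx), ?_⟩
  have key : T (Polynomial.aeval T P.divX x) + P.coeff 0 • x = 0 := by
    have h2 := hkill
    rw [← Polynomial.X_mul_divX_add P, map_add, map_mul, Polynomial.aeval_X,
      Polynomial.aeval_C, LinearMap.add_apply, Module.End.mul_apply,
      Module.algebraMap_end_apply] at h2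
    exact h2
  have hTz : T (Polynomial.aeval T P.divX x) = -(P.coeff 0 • x) :=
    eq_neg_of_add_eq_zero_left key
  rw [map_smul, hTz, smul_neg, neg_smul, neg_neg, smul_smul, inv_mul_cancel₀ hc, one_smul]


lemma aux_mem_A {K : Type} [Field K] (V : AlgClosureValuation K) (a : ℚ)
    {M : Type} [AddCommGroup M] [Module K M] (T : M →ₗ[K] M)
    {Wi Ai Bi : Submodule K M} (h : SlopeDecompOn K V a M T Wi Ai Bi)
    (P : K[X]) (hP : SlopesLE K V a P) (x : M) (hx : x ∈ Wi)
    (hkill : Polynomial.aeval T P x = 0) : x ∈ Ai := by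
  obtain ⟨hA, hB, hsup, hinf, hAT, hBT, hfin, hex, hinv⟩ := h
  rw [← hsup] at hx
  obtain ⟨y, hy, z, hz, rfl⟩ := Submodule.mem_sup.mp hx
  rw [map_add] at hkill
  have h1 : Polynomial.aeval T P z ∈ Ai := by
    have he : Polynomial.aeval T P z = -(Polynomial.aeval T P y) :=
      eq_neg_of_add_eq_zero_right hkill
    rw [he]
    exact Ai.neg_mem (aux_map_aeval_mem T Ai hAT P y hy)
  have h2 : Polynomial.aeval T P z ∈ Bi := aux_map_aeval_mem T Bi hBT P z hz
  have hz0 : z = 0 := (hinv P hP).2 z hz (by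
    have hm : Polynomial.aeval T P z ∈ Ai ⊓ Bi := ⟨h1, h2⟩
    rw [hinf] at hm
    exact hm)
  rw [hz0, add_zero]
  exact hy

/-- **Slope decompositions in increasing unions.**  Let `W 0 ⊆ W 1 ⊆ ⋯` be an
increasing chain of subspaces with union the whole space, and `T` an endomorphism
with `T (W (i+1)) ⊆ W i` (and `T (W 0) ⊆ W 0`).  If each `W i` admits a slope `≤ a`
decomposition `(A i, B i)`, then the `A i` are all equal, and the whole space admits
a slope `≤ a` decomposition `(A 0, ⨆ i, B i)`. -/
theorem slope_decomposition_union
    (V : AlgClosureValuation K) (hV : V.IsComplete) (a : ℚ)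
    (M : Type) [AddCommGroup M] [Module K M] (T : M →ₗ[K] M)
    (W : ℕ → Submodule K M) (hmono : Monotone W) (hunion : (⨆ i, W i) = ⊤)
    (hT0 : (W 0).map T ≤ W 0) (hT : ∀ i, (W (i + 1)).map T ≤ W i)
    (A B : ℕ → Submodule K M)
    (hdec : ∀ i, SlopeDecompOn K V a M T (W i) (A i) (B i)) :
    (∀ i j, A i = A j) ∧ SlopeDecompOn K V a M T ⊤ (A 0) (⨆ i, B i) := by
  have hAW : ∀ i, A i ≤ W i := fun i => (hdec i).1
  have hBW : ∀ i, B i ≤ W i := fun i => (hdec i).2.1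
  have hsup : ∀ i, A i ⊔ B i = W i := fun i => (hdec i).2.2.1
  have hinf : ∀ i, A i ⊓ B i = ⊥ := fun i => (hdec i).2.2.2.1
  have hAT : ∀ i, (A i).map T ≤ A i := fun i => (hdec i).2.2.2.2.1
  have hBT : ∀ i, (B i).map T ≤ B i := fun i => (hdec i).2.2.2.2.2.1
  have hex : ∀ i, ∃ P : K[X], SlopesLE K V a P ∧ ∀ x ∈ A i, Polynomial.aeval T P x = 0 :=
    fun i => (hdec i).2.2.2.2.2.2.2.1
  have hinv : ∀ i, ∀ P : K[X], SlopesLE K V a P →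
      Submodule.map (Polynomial.aeval T P) (B i) = B i ∧
      ∀ x ∈ B i, Polynomial.aeval T P x = 0 → x = 0 :=
    fun i => (hdec i).2.2.2.2.2.2.2.2
  have hstep : ∀ j d, A j ≤ W (j - d) := by
    intro j d
    induction d with
    | zero => simpa using hAW j
    | succ d ih =>
      intro x hx
      obtain ⟨P, hP, hkill⟩ := hex j
      obtain ⟨y, hy, rfl⟩ := aux_exists_preimage T (A j) (hAT j) P
        (aux_coeff_zero_ne V a P hP) x hx (hkill x hx)
      have hyW : y ∈ W (j - d) := ih hy
      have hsub : j - (d + 1) = (j - d) - 1 := by omega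
      rw [hsub]
      cases hjd : j - d with
      | zero =>
        rw [hjd] at hyW
        simpa using hT0 ⟨y, hyW, rfl⟩
      | succ m =>
        rw [hjd] at hyW
        simpa using hT m ⟨y, hyW, rfl⟩
  have hA0 : ∀ j, A j = A 0 := by
    intro j
    obtain ⟨Pj, hPj, hkj⟩ := hex j
    obtain ⟨P0, hP0, hk0⟩ := hex 0
    apply le_antisymm
    · intro x hx
      have hxW : x ∈ W 0 := by simpa using hstep j j hx
      exact aux_mem_A V a T (hdec 0) Pj hPj x hxW (hkj x hx)
    · intro x hx
      have hxW : x ∈ W j := hmono (Nat.zero_le j) (hAW 0 hx)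
      exact aux_mem_A V a T (hdec j) P0 hP0 x hxW (hk0 x hx)
  have hAeq : ∀ i j, A i = A j := fun i j => (hA0 i).trans (hA0 j).symm
  have hBmono : Monotone B := by
    intro i j hij x hx
    obtain ⟨Pj, hPj, hkj⟩ := hex j
    rw [← (hinv i Pj hPj).1] at hx
    obtain ⟨x', hx', rfl⟩ := hx
    have hx'W : x' ∈ W j := hmono hij (hBW i hx')
    rw [← hsup j] at hx'W
    obtain ⟨y, hy, z, hz, rfl⟩ := Submodule.mem_sup.mp hx'W
    rw [map_add, hkj y hy, zero_add]
    exact aux_map_aeval_mem T (B j) (hBT j) Pj z hz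
  have hdir : Directed (· ≤ ·) B := hBmono.directed_le
  refine ⟨hAeq, le_top, le_top, ?_, ?_, hAT 0, ?_, (hdec 0).2.2.2.2.2.2.1, hex 0, ?_⟩
  · apply le_antisymm le_top
    rw [← hunion]
    apply iSup_le
    intro i
    rw [← hsup i, hA0 i]
    exact sup_le_sup le_rfl (le_iSup B i)
  · rw [eq_bot_iff]
    intro x hx
    obtain ⟨hxA, hxB⟩ := hx
    obtain ⟨i, hxi⟩ := (Submodule.mem_iSup_of_directed _ hdir).mp hxB
    have hmem : x ∈ A i ⊓ B i := ⟨by rw [hA0 i]; exact hxA, hxi⟩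
    rw [hinf i] at hmem
    exact hmem
  · rw [Submodule.map_iSup]
    exact iSup_mono fun i => hBT i
  · intro P hP
    constructor
    · rw [Submodule.map_iSup]
      exact iSup_congr fun i => (hinv i P hP).1
    · intro x hx hx0
      obtain ⟨i, hxi⟩ := (Submodule.mem_iSup_of_directed _ hdir).mp hx
      exact (hinv i P hP).2 x hxi hx0
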